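/- The temporally-extended optimality operator T_J defined by (T_J V)(s) := max_{a, 1 ≤ j ≤ J} [ Σ_{k=0}^{j-1} γ^k r(s_k, a) + γ^j V(s_j) ] is a γ-contraction in the supremum norm on the space of bounded functions V : S → ℝ, for any J ≥ 1 and γ ∈ [0,1). -/

import Mathlib

/-- The temporally-extended optimality operator `T_J` is a `γ`-contraction in
the supremum norm: `max_s |T_J V (s) − T_J W (s)| ≤ γ · max_s |V(s) − W(s)|`. -/
theorem extended_operator_contraction (S A : Type*) [Fintype S] [Fintype A]
    [Nonempty S] [Nonempty A]
    (P : S → A → S) (r : S → A → ℝ) (γ : ℝ) (hγ0 : 0 ≤ γ) (hγ1 : γ < 1)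
    (J : ℕ) (hJ : 1 ≤ J)
    (TJ : (S → ℝ) → S → ℝ)
    (hT : ∀ V s, TJ V s =
      ((Finset.univ : Finset A) ×ˢ Finset.Icc 1 J).sup'
        (Finset.Nonempty.product Finset.univ_nonempty
          (Finset.nonempty_Icc.mpr hJ))
        (fun p => (∑ k ∈ Finset.range p.2, γ ^ k * r ((fun x => P x p.1)^[k] s) p.1) +
          γ ^ p.2 * V ((fun x => P x p.1)^[p.2] s))) :
    ∀ V W : S → ℝ,
      Finset.univ.sup' Finset.univ_nonempty (fun s => |TJ V s - TJ W s|) ≤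
        γ * Finset.univ.sup' Finset.univ_nonempty (fun s => |V s - W s|) := by
  intro V W
  set M := Finset.univ.sup' Finset.univ_nonempty (fun s => |V s - W s|) with hM
  have hMle : ∀ x : S, |V x - W x| ≤ M := fun x =>
    Finset.le_sup' (fun s => |V s - W s|) (Finset.mem_univ x)
  have hM0 : 0 ≤ M := le_trans (abs_nonneg _) (hMle (Classical.arbitrary S))
  -- key one-sided estimate
  have key : ∀ V' W' : S → ℝ, (∀ x : S, V' x - W' x ≤ M) →
      ∀ s : S, TJ V' s - TJ W' s ≤ γ * M := by
    intro V' W' hVW s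
    rw [hT, hT, sub_le_iff_le_add]
    apply Finset.sup'_le
    intro p hp
    have hp2 : 1 ≤ p.2 := (Finset.mem_Icc.mp (Finset.mem_product.mp hp).2).1
    have hpow : γ ^ p.2 ≤ γ := by
      calc γ ^ p.2 ≤ γ ^ 1 := pow_le_pow_of_le_one hγ0 hγ1.le hp2
      _ = γ := pow_one γ
    have h1 : γ ^ p.2 * V' ((fun x => P x p.1)^[p.2] s) ≤
        γ ^ p.2 * W' ((fun x => P x p.1)^[p.2] s) + γ * M := by
      nlinarith [pow_nonneg hγ0 p.2,
        mul_le_mul_of_nonneg_left (hVW ((fun x => P x p.1)^[p.2] s)) (pow_nonneg hγ0 p.2),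
        mul_le_mul_of_nonneg_right hpow hM0]
    calc (∑ k ∈ Finset.range p.2, γ ^ k * r ((fun x => P x p.1)^[k] s) p.1) +
          γ ^ p.2 * V' ((fun x => P x p.1)^[p.2] s)
        ≤ ((∑ k ∈ Finset.range p.2, γ ^ k * r ((fun x => P x p.1)^[k] s) p.1) +
          γ ^ p.2 * W' ((fun x => P x p.1)^[p.2] s)) + γ * M := by linarith
      _ ≤ _ := by
          rw [add_comm (γ * M)]
          refine add_le_add_left ?_ (γ * M)
          exact Finset.le_sup' (fun p : A × ℕ =>
            (∑ k ∈ Finset.range p.2, γ ^ k * r ((fun x => P x p.1)^[k] s) p.1) +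
            γ ^ p.2 * W' ((fun x => P x p.1)^[p.2] s)) hp
  apply Finset.sup'_le
  intro s _
  rw [abs_sub_le_iff]
  constructor
  · exact key V W (fun x => le_trans (le_abs_self _) (hMle x)) s
  · refine key W V (fun x => ?_) s
    have h := hMle x
    rw [abs_sub_comm] at h
    linarith [le_abs_self (W x - V x)]
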